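/- Let z, q, q', q'', r, l, w be unit vectors in ℝ³ such that q' ⊥ z, q' ⊥ q, q'' ⊥ q, q'' ⊥ q', r ⊥ q'', l ⊥ r, l ⊥ q'', w ⊥ z, and w ⊥ q'. Suppose p assigns non-negative real values to these vectors and satisfies p(q) + p(q') + p(q'') = 1, p(r) + p(l) + p(q'') = 1, and p(z) + p(q') + p(w) = 1. If p(z) = 1 then p(q) ≥ p(r). -/

import Mathlib

/-- The basic orthogonality-graph lemma for `G(z,q,r)`: with the orthogonality
relations between `z, q, q', q'', r, l, w` as in the graph, nonnegativity of `p` on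
these vectors, and the state equations on the three orthogonal triples
`(q,q',q'')`, `(r,l,q'')`, `(z,q',w)`, the condition `p z = 1` entails `p q ≥ p r`. -/
theorem graph_lemma (z q q' q'' r l w : EuclideanSpace ℝ (Fin 3))
    (hz : ‖z‖ = 1) (hq : ‖q‖ = 1) (hq' : ‖q'‖ = 1) (hq'' : ‖q''‖ = 1)
    (hr : ‖r‖ = 1) (hl : ‖l‖ = 1) (hw : ‖w‖ = 1)
    (h1 : (inner ℝ q' z : ℝ) = 0) (h2 : (inner ℝ q' q : ℝ) = 0)
    (h3 : (inner ℝ q'' q : ℝ) = 0) (h4 : (inner ℝ q'' q' : ℝ) = 0)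
    (h5 : (inner ℝ r q'' : ℝ) = 0) (h6 : (inner ℝ l r : ℝ) = 0)
    (h7 : (inner ℝ l q'' : ℝ) = 0) (h8 : (inner ℝ w z : ℝ) = 0)
    (h9 : (inner ℝ w q' : ℝ) = 0)
    (p : EuclideanSpace ℝ (Fin 3) → ℝ)
    (hpz : 0 ≤ p z) (hpq : 0 ≤ p q) (hpq' : 0 ≤ p q') (hpq'' : 0 ≤ p q'')
    (hpr : 0 ≤ p r) (hpl : 0 ≤ p l) (hpw : 0 ≤ p w)
    (e1 : p q + p q' + p q'' = 1) (e2 : p r + p l + p q'' = 1)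
    (e3 : p z + p q' + p w = 1) (hz1 : p z = 1) :
    p r ≤ p q := by
  linarith
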